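/- arXiv:1911.08182 — 4 statements merged into one kernel-verified Lean document; each statement's English description precedes it below -/
import Mathlib

section
/- Let N be a finite set of nodes, H ⊆ N the honest nodes, and for each honest node i let T_i ⊆ N be its trust set and q_i ∈ (0.5,1] its quota. Given an opinion profile 𝒪 (assigning to each honest node an opinion in {0,1} and to each Byzantine node a function from honest nodes to {0,1}), let T_j^𝒪(x) be the set of nodes trusted by j that reveal opinion x to j. Define β_{ij} = min{|T_i ∩ T_j|, b_i·|T_i|, b_j·|T_j|} where b_i is the Byzantine tolerance fraction of node i. Then for any profile 𝒪 and honest nodes i, j, if |T_i^𝒪(x)| > 0 then |T_j^𝒪(x) ∩ H| ≥ |T_i ∩ T_j| + |T_i^𝒪(x)| − |T_i| − β_{ij}. -/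
/-- lower bound on the number of honest nodes with opinion `x`
seen by honest node `j`, given what honest node `i` sees (Lemma 1, eq. (1)). -/
theorem qbtn_honest_lower_bound
    {V : Type*} [DecidableEq V] [Fintype V]
    (H : Finset V)                    -- honest nodes
    (T : V → Finset V)                -- trust sets
    (b : V → ℝ)                       -- Byzantine tolerance fraction of each node
    (O : V → V → Bool)                -- O k j = opinion node k reveals to node j
    (hhonest : ∀ k ∈ H, ∀ u v : V, O k u = O k v)  -- honest nodes reveal one opinion
    (i j : V) (hi : i ∈ H) (hj : j ∈ H)
    (β : ℝ)
    (hβ : β = min ((T i ∩ T j).card : ℝ)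
              (min (b i * ((T i).card : ℝ)) (b j * ((T j).card : ℝ))))
    -- at most β Byzantine nodes lie in T i ∩ T j
    (hbyz : ((((T i ∩ T j).filter (fun k => k ∉ H)).card : ℝ)) ≤ β)
    (x : Bool)
    (hpos : 0 < ((T i).filter (fun k => O k i = x)).card) :
    ((T i ∩ T j).card : ℝ) + (((T i).filter (fun k => O k i = x)).card : ℝ)
        - ((T i).card : ℝ) - β
      ≤ ((((T j).filter (fun k => O k j = x)) ∩ H).card : ℝ) := by
  classical
  set A : Finset V := T i ∩ T j with hA
  set X : Finset V := (T i).filter (fun k => O k i = x) with hX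
  set S : Finset V := A ∩ X with hS
  -- |A| + |X| - |T i| ≤ |S|  (both A and X are subsets of T i)
  have hUnion : A ∪ X ⊆ T i := by
    apply Finset.union_subset
    · exact Finset.inter_subset_left
    · exact Finset.filter_subset _ _
  have hcard1 : A.card + X.card ≤ S.card + (T i).card := by
    have := Finset.card_union_add_card_inter A X
    rw [← hS] at this
    have h2 : (A ∪ X).card ≤ (T i).card := Finset.card_le_card hUnion
    omega
  -- honest part of S
  have hSplit : (S.filter (fun k => k ∈ H)).card + (S.filter (fun k => k ∉ H)).card
      = S.card := Finset.card_filter_add_card_filter_not (p := fun k => k ∈ H)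
  have hbyzsub : (S.filter (fun k => k ∉ H)).card ≤ (A.filter (fun k => k ∉ H)).card :=
    Finset.card_le_card (Finset.filter_subset_filter _ (Finset.inter_subset_left))
  -- S.filter(∈ H) ⊆ T_j^x ∩ H
  have hsub : S.filter (fun k => k ∈ H) ⊆ ((T j).filter (fun k => O k j = x)) ∩ H := by
    intro k hk
    simp only [hS, hA, hX, Finset.mem_filter, Finset.mem_inter] at hk ⊢
    obtain ⟨⟨⟨hki, hkj⟩, _, hox⟩, hkH⟩ := hk
    exact ⟨⟨hkj, by rw [hhonest k hkH j i]; exact hox⟩, hkH⟩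
  have hfinal : (S.filter (fun k => k ∈ H)).card ≤
      (((T j).filter (fun k => O k j = x)) ∩ H).card := Finset.card_le_card hsub
  have key : (A.card : ℝ) + (X.card : ℝ) - ((T i).card : ℝ)
      - ((A.filter (fun k => k ∉ H)).card : ℝ)
      ≤ ((((T j).filter (fun k => O k j = x)) ∩ H).card : ℝ) := by
    have : A.card + X.card ≤
        (((T j).filter (fun k => O k j = x)) ∩ H).card + (T i).card
        + (A.filter (fun k => k ∉ H)).card := by omega
    push_cast
    linarith [(by exact_mod_cast this :
      (A.card : ℝ) + X.card ≤ ((((T j).filter (fun k => O k j = x)) ∩ H).card : ℝ)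
        + (T i).card + (A.filter (fun k => k ∉ H)).card)]
  linarith
end

section
/- Under the same setup as in the lower-bound lemma: for any profile 𝒪 and honest nodes i, j, if |T_i^𝒪(x)| > 0, then the number of nodes in j's trust set revealing the opposite opinion satisfies |T_j^𝒪(x̄)| ≤ |T_j| − |T_i ∩ T_j| − |T_i^𝒪(x)| + |T_i| + β_{ij}. -/
/-- upper bound on the number of nodes revealing the opposite
opinion `!x` to honest node `j` (Lemma 1, eq. (2)). -/
theorem qbtn_opposite_upper_bound
    {V : Type*} [DecidableEq V] [Fintype V]
    (H : Finset V)                    -- honest nodes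
    (T : V → Finset V)                -- trust sets
    (b : V → ℝ)                       -- Byzantine tolerance fraction of each node
    (O : V → V → Bool)                -- O k j = opinion node k reveals to node j
    (hhonest : ∀ k ∈ H, ∀ u v : V, O k u = O k v)
    (i j : V) (hi : i ∈ H) (hj : j ∈ H)
    (β : ℝ)
    (hβ : β = min ((T i ∩ T j).card : ℝ)
              (min (b i * ((T i).card : ℝ)) (b j * ((T j).card : ℝ))))
    (hbyz : ((((T i ∩ T j).filter (fun k => k ∉ H)).card : ℝ)) ≤ β)
    (x : Bool)
    (hpos : 0 < ((T i).filter (fun k => O k i = x)).card) :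
    (((T j).filter (fun k => O k j = !x)).card : ℝ)
      ≤ ((T j).card : ℝ) - ((T i ∩ T j).card : ℝ)
          - (((T i).filter (fun k => O k i = x)).card : ℝ)
          + ((T i).card : ℝ) + β := by
  -- Step 1: intersection part is covered by Byzantine nodes plus i's !x-revealers
  have hclaim1 : ((T i ∩ T j).filter (fun k => O k j = !x)).card ≤
      ((T i ∩ T j).filter (fun k => k ∉ H)).card +
      ((T i).filter (fun k => O k i = !x)).card := by
    refine le_trans (Finset.card_le_card (s := _)
      (t := ((T i ∩ T j).filter (fun k => k ∉ H)) ∪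
            ((T i).filter (fun k => O k i = !x))) ?_) (Finset.card_union_le _ _)
    intro k hk
    simp only [Finset.mem_filter, Finset.mem_inter, Finset.mem_union] at hk ⊢
    by_cases hkH : k ∈ H
    · exact Or.inr ⟨hk.1.1, (hhonest k hkH i j).trans hk.2⟩
    · exact Or.inl ⟨hk.1, hkH⟩
  -- Step 2: i's !x-revealers complement x-revealers
  have hclaim2 : ((T i).filter (fun k => O k i = !x)).card =
      (T i).card - ((T i).filter (fun k => O k i = x)).card := by
    have : ((T i).filter (fun k => O k i = !x)) =
        T i \ ((T i).filter (fun k => O k i = x)) := by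
      ext k
      simp only [Finset.mem_filter, Finset.mem_sdiff, Bool.eq_not_iff]
      tauto
    rw [this, Finset.card_sdiff_of_subset (Finset.filter_subset _ _)]
  -- Step 3: split T_j filter into outside/inside T_i
  have hclaim3 : ((T j).filter (fun k => O k j = !x)).card ≤
      ((T j).card - (T i ∩ T j).card) +
      ((T i ∩ T j).filter (fun k => O k j = !x)).card := by
    have hsplit : ((T j).filter (fun k => O k j = !x)) ⊆
        (T j \ T i) ∪ ((T i ∩ T j).filter (fun k => O k j = !x)) := by
      intro k hk
      simp only [Finset.mem_filter, Finset.mem_union, Finset.mem_sdiff,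
        Finset.mem_inter] at hk ⊢
      by_cases hki : k ∈ T i
      · exact Or.inr ⟨⟨hki, hk.1⟩, hk.2⟩
      · exact Or.inl ⟨hk.1, hki⟩
    calc ((T j).filter (fun k => O k j = !x)).card
        ≤ ((T j \ T i) ∪ ((T i ∩ T j).filter (fun k => O k j = !x))).card :=
          Finset.card_le_card hsplit
      _ ≤ (T j \ T i).card + ((T i ∩ T j).filter (fun k => O k j = !x)).card :=
          Finset.card_union_le _ _
      _ = ((T j).card - (T i ∩ T j).card) +
          ((T i ∩ T j).filter (fun k => O k j = !x)).card := by
          have h := Finset.card_sdiff_add_card_inter (T j) (T i)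
          have h2 : (T j ∩ T i).card = (T i ∩ T j).card := by
            rw [Finset.inter_comm]
          omega
  have h1 : (T i ∩ T j).card ≤ (T j).card :=
    Finset.card_le_card (Finset.inter_subset_right)
  have h2 : ((T i).filter (fun k => O k i = x)).card ≤ (T i).card :=
    Finset.card_le_card (Finset.filter_subset _ _)
  have key : ((T j).filter (fun k => O k j = !x)).card +
      (T i ∩ T j).card + ((T i).filter (fun k => O k i = x)).card ≤
      (T j).card + (T i).card + ((T i ∩ T j).filter (fun k => k ∉ H)).card := by
    omega
  have := hbyz
  push_cast at key ⊢
  have keyR : (((T j).filter (fun k => O k j = !x)).card : ℝ) +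
      ((T i ∩ T j).card : ℝ) + (((T i).filter (fun k => O k i = x)).card : ℝ) ≤
      ((T j).card : ℝ) + ((T i).card : ℝ) +
      ((((T i ∩ T j).filter (fun k => k ∉ H)).card : ℝ)) := by
    exact_mod_cast key
  linarith
end

section
/- In the 3SAT reduction instance (as defined in the context): if the 3CNF formula φ is satisfiable via assignment α, then the sets Q_1 = {z_1, c_1,...,c_m} ∪ {σ(ρ(c_j)) : j ∈ [m]} and Q_2 = {z_0, y_1,...,y_n} ∪ {μ(x_i) : i ∈ [n]} are disjoint quora, where ρ(c_j) is a literal of clause c_j satisfied by α, σ maps literal x_i to p_i and ¬x_i to n_i, and μ(x_i) = n_i if α(x_i)=1 and μ(x_i) = p_i otherwise. -/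
/-- Node set of the reduction: `z_0, z_1`, clause nodes `c_j`, and for each
variable `x_i` the nodes `y_i, p_i, n_i`. -/
abbrev Node (n m : ℕ) := Fin 2 ⊕ (Fin m ⊕ Fin n × Fin 3)

variable {n m : ℕ}

def z0 : Node n m := Sum.inl 0
def z1 : Node n m := Sum.inl 1
def cl (j : Fin m) : Node n m := Sum.inr (Sum.inl j)
def yv (i : Fin n) : Node n m := Sum.inr (Sum.inr (i, 0))
def pv (i : Fin n) : Node n m := Sum.inr (Sum.inr (i, 1))
def nv (i : Fin n) : Node n m := Sum.inr (Sum.inr (i, 2))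

/-- `σ` maps a positive literal `x_i` to `p_i` and a negative literal `¬x_i`
to `n_i`. -/
def sig (l : Fin n × Bool) : Node n m := if l.2 then pv l.1 else nv l.1

/-- The winning-coalition collections of the reduction instance built from a
3CNF formula `φ` (clause `j` has literals `φ j 0, φ j 1, φ j 2`). -/
def Coal (φ : Fin m → Fin 3 → Fin n × Bool) : Node n m → Finset (Finset (Node n m)) :=
  fun v => match v with
  | Sum.inl a =>
      if a = 0 then {insert z0 (Finset.univ.image yv)}
      else {insert z1 (Finset.univ.image cl)}
  | Sum.inr (Sum.inl j) =>
      Finset.univ.image (fun u : Fin 3 => ({cl j, sig (φ j u)} : Finset (Node n m)))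
  | Sum.inr (Sum.inr (i, k)) =>
      if k = 0 then {({yv i, pv i} : Finset (Node n m)), {yv i, nv i}}
      else if k = 1 then {({pv i, z0} : Finset (Node n m)), {pv i, z1}}
      else {({nv i, z0} : Finset (Node n m)), {nv i, z1}}

/-- A quorum. -/
def IsQuorum {V : Type*} [DecidableEq V] (𝒞 : V → Finset (Finset V))
    (Q : Finset V) : Prop :=
  Q.Nonempty ∧ ∀ i ∈ Q, ∃ C ∈ 𝒞 i, C ⊆ Q

/-- if `α` satisfies `φ` (witnessed by `ρ` picking in each
clause a literal satisfied by `α`), then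
`Q1 = {z_1, c_1, …, c_m} ∪ {σ(ρ(c_j))}` and
`Q2 = {z_0, y_1, …, y_n} ∪ {μ(x_i)}` (with `μ(x_i) = n_i` if `α x_i = 1`,
else `p_i`) are disjoint quora of the reduction instance. -/
theorem satisfiable_gives_disjoint_quora
    (φ : Fin m → Fin 3 → Fin n × Bool) (α : Fin n → Bool) (ρ : Fin m → Fin 3)
    (hρ : ∀ j : Fin m, α (φ j (ρ j)).1 = (φ j (ρ j)).2) :
    IsQuorum (Coal φ)
        (insert z1 (Finset.univ.image cl
          ∪ Finset.univ.image (fun j : Fin m => sig (φ j (ρ j))))) ∧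
    IsQuorum (Coal φ)
        (insert z0 (Finset.univ.image yv
          ∪ Finset.univ.image (fun i : Fin n => if α i then nv i else pv i))) ∧
    Disjoint
        ((insert z1 (Finset.univ.image cl
          ∪ Finset.univ.image (fun j : Fin m => sig (φ j (ρ j))))) : Finset (Node n m))
        ((insert z0 (Finset.univ.image yv
          ∪ Finset.univ.image (fun i : Fin n => if α i then nv i else pv i))) : Finset (Node n m)) := by

  set Q1 : Finset (Node n m) := insert z1 (Finset.univ.image cl
      ∪ Finset.univ.image (fun j : Fin m => sig (φ j (ρ j)))) with hQ1
  set Q2 : Finset (Node n m) := insert z0 (Finset.univ.image yv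
      ∪ Finset.univ.image (fun i : Fin n => if α i then nv i else pv i)) with hQ2
  have hz1 : z1 ∈ Q1 := Finset.mem_insert_self _ _
  have hz0 : z0 ∈ Q2 := Finset.mem_insert_self _ _
  have hclQ : ∀ j : Fin m, cl j ∈ Q1 := fun j =>
    Finset.mem_insert_of_mem (Finset.mem_union_left _ (Finset.mem_image_of_mem _ (Finset.mem_univ j)))
  have hsigQ : ∀ j : Fin m, sig (φ j (ρ j)) ∈ Q1 := fun j =>
    Finset.mem_insert_of_mem (Finset.mem_union_right _ (Finset.mem_image_of_mem _ (Finset.mem_univ j)))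
  have hyvQ : ∀ i : Fin n, yv i ∈ Q2 := fun i =>
    Finset.mem_insert_of_mem (Finset.mem_union_left _ (Finset.mem_image_of_mem _ (Finset.mem_univ i)))
  have hmuQ : ∀ i : Fin n, (if α i then nv i else pv i) ∈ Q2 := fun i =>
    Finset.mem_insert_of_mem (Finset.mem_union_right _ (Finset.mem_image_of_mem _ (Finset.mem_univ i)))
  refine ⟨⟨⟨z1, hz1⟩, ?_⟩, ⟨⟨z0, hz0⟩, ?_⟩, ?_⟩
  · intro v hv
    rcases Finset.mem_insert.1 hv with rfl | hv
    · refine ⟨insert z1 (Finset.univ.image cl), ?_, ?_⟩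
      · simp [Coal, z1]
      · refine Finset.insert_subset hz1 ?_
        intro x hx
        obtain ⟨j, _, rfl⟩ := Finset.mem_image.1 hx
        exact hclQ j
    · rcases Finset.mem_union.1 hv with hv | hv
      · obtain ⟨j, _, rfl⟩ := Finset.mem_image.1 hv
        refine ⟨{cl j, sig (φ j (ρ j))}, ?_, ?_⟩
        · simp only [Coal, cl, Finset.mem_image]
          exact ⟨ρ j, Finset.mem_univ _, rfl⟩
        · intro x hx
          rcases Finset.mem_insert.1 hx with rfl | hx
          · exact hclQ j
          · rw [Finset.mem_singleton.1 hx]; exact hsigQ j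
      · obtain ⟨j, _, rfl⟩ := Finset.mem_image.1 hv
        by_cases hb : (φ j (ρ j)).2
        · refine ⟨{pv (φ j (ρ j)).1, z1}, ?_, ?_⟩
          · have : sig (n := n) (m := m) (φ j (ρ j)) = pv (φ j (ρ j)).1 := by
              simp [sig, hb]
            rw [this]
            simp [Coal, pv]
          · intro x hx
            rcases Finset.mem_insert.1 hx with rfl | hx
            · have := hsigQ j; simpa [sig, hb] using this
            · rw [Finset.mem_singleton.1 hx]; exact hz1
        · refine ⟨{nv (φ j (ρ j)).1, z1}, ?_, ?_⟩
          · have : sig (n := n) (m := m) (φ j (ρ j)) = nv (φ j (ρ j)).1 := by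
              simp [sig, hb]
            rw [this]
            simp [Coal, nv]
          · intro x hx
            rcases Finset.mem_insert.1 hx with rfl | hx
            · have := hsigQ j; simpa [sig, hb] using this
            · rw [Finset.mem_singleton.1 hx]; exact hz1
  · intro v hv
    rcases Finset.mem_insert.1 hv with rfl | hv
    · refine ⟨insert z0 (Finset.univ.image yv), ?_, ?_⟩
      · simp [Coal, z0]
      · refine Finset.insert_subset hz0 ?_
        intro x hx
        obtain ⟨i, _, rfl⟩ := Finset.mem_image.1 hx
        exact hyvQ i
    · rcases Finset.mem_union.1 hv with hv | hv
      · obtain ⟨i, _, rfl⟩ := Finset.mem_image.1 hv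
        by_cases hb : α i
        · refine ⟨{yv i, nv i}, ?_, ?_⟩
          · simp [Coal, yv]
          · intro x hx
            rcases Finset.mem_insert.1 hx with rfl | hx
            · exact hyvQ i
            · rw [Finset.mem_singleton.1 hx]
              have := hmuQ i; simpa [hb] using this
        · refine ⟨{yv i, pv i}, ?_, ?_⟩
          · simp [Coal, yv]
          · intro x hx
            rcases Finset.mem_insert.1 hx with rfl | hx
            · exact hyvQ i
            · rw [Finset.mem_singleton.1 hx]
              have := hmuQ i; simpa [hb] using this
      · obtain ⟨i, _, rfl⟩ := Finset.mem_image.1 hv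
        by_cases hb : α i
        · refine ⟨{nv i, z0}, ?_, ?_⟩
          · simp [hb, Coal, nv]
          · intro x hx
            rcases Finset.mem_insert.1 hx with rfl | hx
            · have := hmuQ i; simpa [hb] using this
            · rw [Finset.mem_singleton.1 hx]; exact hz0
        · refine ⟨{pv i, z0}, ?_, ?_⟩
          · simp [hb, Coal, pv]
          · intro x hx
            rcases Finset.mem_insert.1 hx with rfl | hx
            · have := hmuQ i; simpa [hb] using this
            · rw [Finset.mem_singleton.1 hx]; exact hz0
  · rw [Finset.disjoint_left]
    intro a ha1 ha2
    rcases Finset.mem_insert.1 ha1 with rfl | ha1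
    · rcases Finset.mem_insert.1 ha2 with h | h
      · exact absurd h (by simp [z0, z1])
      · rcases Finset.mem_union.1 h with h | h <;> obtain ⟨i, _, hi⟩ := Finset.mem_image.1 h
        · exact absurd hi (by simp [z1, yv])
        · revert hi; split <;> simp [z1, nv, pv]
    · rcases Finset.mem_union.1 ha1 with h1 | h1 <;> obtain ⟨j, _, rfl⟩ := Finset.mem_image.1 h1
      · rcases Finset.mem_insert.1 ha2 with h | h
        · exact absurd h (by simp [z0, cl])
        · rcases Finset.mem_union.1 h with h | h <;> obtain ⟨i, _, hi⟩ := Finset.mem_image.1 h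
          · exact absurd hi (by simp [cl, yv])
          · revert hi; split <;> simp [cl, nv, pv]
      · rcases Finset.mem_insert.1 ha2 with h | h
        · revert h; unfold sig; split <;> simp [z0, pv, nv]
        · rcases Finset.mem_union.1 h with h | h <;> obtain ⟨i, _, hi⟩ := Finset.mem_image.1 h
          · revert hi; unfold sig; split <;> simp [yv, pv, nv]
          · have hα := hρ j
            revert hi
            unfold sig
            rcases hbj : (φ j (ρ j)).2 with _ | _ <;> simp [hbj] at hα ⊢ <;>
              rcases hbi : α i with _ | _ <;> simp [hbi, pv, nv] <;>
              rintro rfl <;> simp_all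
end

section
/- In the 3SAT reduction instance (as in the context): if there exist two disjoint quora Q_1, Q_2 with z_1 ∈ Q_1 and z_0 ∈ Q_2, then the assignment α defined by α(x_i) = 1 if n_i ∈ Q_2 and α(x_i) = 0 if p_i ∈ Q_2 satisfies every clause of φ. -/
variable {n m : ℕ}

/-- if the reduction instance has two disjoint quora `Q1, Q2`
with `z_1 ∈ Q1` and `z_0 ∈ Q2`, then the assignment `α(x_i) = 1` iff
`n_i ∈ Q2` (and `α(x_i) = 0` when `p_i ∈ Q2`) satisfies every clause of `φ`. -/
theorem disjoint_quora_give_satisfying_assignment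
    (φ : Fin m → Fin 3 → Fin n × Bool)
    (Q1 Q2 : Finset (Node n m))
    (h1 : IsQuorum (Coal φ) Q1) (h2 : IsQuorum (Coal φ) Q2)
    (hd : Disjoint Q1 Q2) (hz1 : z1 ∈ Q1) (hz0 : z0 ∈ Q2) :
    ∀ j : Fin m, ∃ u : Fin 3,
      decide (nv (φ j u).1 ∈ Q2) = (φ j u).2 := by
  intro j
  -- all clause nodes are in Q1
  obtain ⟨C, hC, hCsub⟩ := h1.2 z1 hz1
  have hC1 : C = insert z1 (Finset.univ.image cl) := by
    simpa [Coal, z1] using hC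
  have hclj : cl j ∈ Q1 := by
    apply hCsub
    rw [hC1]
    exact Finset.mem_insert_of_mem (Finset.mem_image_of_mem cl (Finset.mem_univ j))
  -- get literal in Q1
  obtain ⟨D, hD, hDsub⟩ := h1.2 (cl j) hclj
  simp only [Coal, cl, Finset.mem_image] at hD
  obtain ⟨u, -, hDu⟩ := hD
  have hsig : sig (φ j u) ∈ Q1 := by
    apply hDsub; rw [← hDu]; simp
  -- all yv are in Q2
  obtain ⟨E, hE, hEsub⟩ := h2.2 z0 hz0
  have hE1 : E = insert z0 (Finset.univ.image yv) := by
    simpa [Coal, z0] using hE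
  refine ⟨u, ?_⟩
  set l := φ j u with hl
  have hyi : yv l.1 ∈ Q2 := by
    apply hEsub
    rw [hE1]
    exact Finset.mem_insert_of_mem (Finset.mem_image_of_mem yv (Finset.mem_univ l.1))
  -- pv or nv in Q2
  obtain ⟨F, hF, hFsub⟩ := h2.2 (yv l.1) hyi
  simp only [Coal, yv] at hF
  rw [if_pos trivial] at hF
  have hpn : pv l.1 ∈ Q2 ∨ nv l.1 ∈ Q2 := by
    rcases Finset.mem_insert.mp hF with h | h
    · left; apply hFsub; rw [h]; simp
    · right; apply hFsub; rw [Finset.mem_singleton.mp h]; simp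
  have hdisj := Finset.disjoint_left.mp hd
  cases hb : l.2 with
  | true =>
    have hp1 : pv l.1 ∈ Q1 := by simpa [sig, hb] using hsig
    have hn2 : nv l.1 ∈ Q2 := by
      rcases hpn with h | h
      · exact absurd h (hdisj hp1)
      · exact h
    simp [hn2, hb]
  | false =>
    have hn1 : nv l.1 ∈ Q1 := by simpa [sig, hb] using hsig
    have : nv l.1 ∉ Q2 := hdisj hn1
    simp [this, hb]
end
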